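/- Let φ : ℝ^n → ℝ be C-semiconcave and κ-Lipschitz, H a Tonelli Hamiltonian with Lagrangian L, and p a Borel measurable selection of D⁺φ. Suppose a Lipschitz curve γ : [0,T] → ℝ^n satisfies the maximal slope identity φ(γ(t₂)) − φ(γ(t₁)) = ∫_{t₁}^{t₂} [ L(γ(s),γ'(s)) + H(γ(s), p(γ(s))) ] ds for all 0 ≤ t₁ ≤ t₂ ≤ T. Then H(γ(s), p(γ(s))) = H(γ(s), p♯(γ(s))) for almost every s ∈ [0,T], and γ is a strict singular characteristic for (φ,H), i.e. γ'(s) = H_p(γ(s), p♯(γ(s))) for almost every s ∈ [0,T]. -/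

import Mathlib

open MeasureTheory Set Filter Topology intervalIntegral
open scoped RealInnerProductSpace NNReal

noncomputable section

abbrev E (n : ℕ) := EuclideanSpace ℝ (Fin n)

variable {n : ℕ}

/-- `φ` is semiconcave with linear modulus and constant `C`. -/
def Semiconcave (C : ℝ) (φ : E n → ℝ) : Prop :=
  ConcaveOn ℝ Set.univ (fun x => φ x - C / 2 * ‖x‖ ^ 2)

/-- The superdifferential of `φ` at `x`. -/
def superdiff (φ : E n → ℝ) (x : E n) : Set (E n) :=
  {p | ∀ ε > 0, ∀ᶠ y in 𝓝 x, φ y - φ x - ⟪p, y - x⟫ ≤ ε * ‖y - x‖}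

/-- Tonelli Hamiltonian. -/
structure IsTonelli (H : E n → E n → ℝ) : Prop where
  smooth : ContDiff ℝ 2 (fun q : E n × E n => H q.1 q.2)
  posdef : ∀ x p v : E n, v ≠ 0 → 0 < iteratedFDeriv ℝ 2 (H x) p ![v, v]
  superlinear : ∀ A : ℝ, 0 ≤ A → ∃ B : ℝ, ∀ x p, A * ‖p‖ - B ≤ H x p

/-- The Tonelli Lagrangian associated to `H` via the Fenchel transform. -/
def Lag (H : E n → E n → ℝ) (x v : E n) : ℝ := ⨆ p : E n, (⟪p, v⟫ - H x p)

/-- Partial gradient of `H` in the momentum variable. -/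
def Hp (H : E n → E n → ℝ) (x p : E n) : E n := gradient (H x) p

/-- `ps` is the minimal energy selection of `D⁺φ` for the pair `(φ, H)`. -/
def MinSel (φ : E n → ℝ) (H : E n → E n → ℝ) (ps : E n → E n) : Prop :=
  ∀ x, ps x ∈ superdiff φ x ∧ ∀ q ∈ superdiff φ x, H x (ps x) ≤ H x q

section Aux

variable {H : E n → E n → ℝ}

lemma key_identity (x y : E n) : ‖y - x‖ ^ 2 = ‖y‖ ^ 2 - ‖x‖ ^ 2 - 2 * ⟪x, y - x⟫ := by
  have h := norm_sub_sq_real y x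
  have h2 : ⟪x, y - x⟫ = ⟪x, y⟫ - ⟪x, x⟫ := inner_sub_right x y x
  have h3 : ⟪x, x⟫ = ‖x‖ ^ 2 := real_inner_self_eq_norm_sq x
  have h4 : ⟪y, x⟫ = ⟪x, y⟫ := real_inner_comm x y
  linarith [h, h2, h3, h4]

/-- Local superdifferential of a semiconcave function gives a global upper bound. -/
lemma superdiff_global {C : ℝ} (hC : 0 ≤ C) {φ : E n → ℝ} (hφ : Semiconcave C φ)
    {x q : E n} (hq : q ∈ superdiff φ x) (y : E n) :
    φ y ≤ φ x + ⟪q, y - x⟫ + C / 2 * ‖y - x‖ ^ 2 := by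
  set ψ : E n → ℝ := fun z => φ z - C / 2 * ‖z‖ ^ 2 with hψ
  -- local bound for ψ
  have hloc : ∀ ε > (0:ℝ), ∀ᶠ z in 𝓝 x, ψ z - ψ x - ⟪q - C • x, z - x⟫ ≤ ε * ‖z - x‖ := by
    intro ε hε
    filter_upwards [hq ε hε] with z hz
    simp only [hψ]
    have hid := key_identity x z
    have : ⟪q - C • x, z - x⟫ = ⟪q, z - x⟫ - C * ⟪x, z - x⟫ := by
      rw [inner_sub_left, real_inner_smul_left]
    nlinarith [sq_nonneg ‖z - x‖]
  -- global bound for ψ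
  have hglob : ψ y - ψ x ≤ ⟪q - C • x, y - x⟫ := by
    refine le_of_forall_pos_le_add (fun ε hε => ?_)
    rcases eq_or_ne y x with rfl | hyx
    · simpa using le_of_lt (by positivity : (0:ℝ) < ε)
    have hεn : (0:ℝ) < ε / ‖y - x‖ := by
      have : (0:ℝ) < ‖y - x‖ := by
        simpa [norm_pos_iff, sub_eq_zero] using hyx
      positivity
    have htend : Tendsto (fun t : ℝ => x + t • (y - x)) (𝓝[>] (0:ℝ)) (𝓝 x) := by
      have hcont : Continuous (fun t : ℝ => x + t • (y - x)) := by
        exact continuous_const.add (continuous_id.smul continuous_const)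
      have := hcont.tendsto (0:ℝ)
      simp only [zero_smul, add_zero] at this
      exact this.mono_left nhdsWithin_le_nhds
    have hev : ∀ᶠ t in 𝓝[>] (0:ℝ),
        ψ (x + t • (y - x)) - ψ x - ⟪q - C • x, (x + t • (y - x)) - x⟫
          ≤ (ε / ‖y - x‖) * ‖(x + t • (y - x)) - x‖ := htend.eventually (hloc _ hεn)
    have hev2 : ∀ᶠ t in 𝓝[>] (0:ℝ), t ∈ Ioc (0:ℝ) 1 := by
      have : Ioc (0:ℝ) 1 ∈ 𝓝[>] (0:ℝ) := Ioc_mem_nhdsGT_of_mem (by norm_num)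
      exact this
    rcases (hev.and hev2).exists with ⟨t, h1, ht0, ht1⟩
    -- concavity
    have hconc := hφ.2 (mem_univ x) (mem_univ y) (by linarith : (0:ℝ) ≤ 1 - t) (le_of_lt ht0)
      (by ring)
    have hpt : (1 - t) • x + t • y = x + t • (y - x) := by
      rw [smul_sub, sub_smul, one_smul]; abel
    rw [hpt] at hconc
    simp only [smul_eq_mul] at hconc
    -- hconc : (1-t) * ψ x + t * ψ y ≤ ψ (x + t • (y-x))
    have hsimp : ⟪q - C • x, (x + t • (y - x)) - x⟫ = t * ⟪q - C • x, y - x⟫ := by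
      rw [add_sub_cancel_left, real_inner_smul_right]
    have hsimp2 : ‖(x + t • (y - x)) - x‖ = t * ‖y - x‖ := by
      rw [add_sub_cancel_left, norm_smul, Real.norm_eq_abs, abs_of_pos ht0]
    rw [hsimp, hsimp2] at h1
    have hnz : ‖y - x‖ ≠ 0 := by
      simpa [norm_eq_zero, sub_eq_zero] using hyx
    simp only [hψ] at h1 ⊢
    have : t * ((φ y - C / 2 * ‖y‖ ^ 2) - (φ x - C / 2 * ‖x‖ ^ 2)) ≤
        t * ⟪q - C • x, y - x⟫ + (ε / ‖y - x‖) * (t * ‖y - x‖) := by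
      nlinarith [hconc]
    have hε' : (ε / ‖y - x‖) * (t * ‖y - x‖) = t * ε := by
      field_simp
    rw [hε'] at this
    nlinarith
  -- unfold
  have hid := key_identity x y
  have hin : ⟪q - C • x, y - x⟫ = ⟪q, y - x⟫ - C * ⟪x, y - x⟫ := by
    rw [inner_sub_left, real_inner_smul_left]
  simp only [hψ] at hglob
  nlinarith


lemma superdiff_norm_le {κ : ℝ≥0} {φ : E n → ℝ} (hφLip : LipschitzWith κ φ)
    {x q : E n} (hq : q ∈ superdiff φ x) : ‖q‖ ≤ κ := by
  rcases eq_or_ne q 0 with rfl | hq0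
  · simp
  have hqn : (0:ℝ) < ‖q‖ := norm_pos_iff.mpr hq0
  refine le_of_forall_pos_le_add (fun ε hε => ?_)
  have htend : Tendsto (fun t : ℝ => x - t • q) (𝓝[>] (0:ℝ)) (𝓝 x) := by
    have hcont : Continuous (fun t : ℝ => x - t • q) :=
      continuous_const.sub (continuous_id.smul continuous_const)
    have := hcont.tendsto (0:ℝ)
    simp only [zero_smul, sub_zero] at this
    exact this.mono_left nhdsWithin_le_nhds
  have hev := htend.eventually (hq ε hε)
  have hev2 : ∀ᶠ t in 𝓝[>] (0:ℝ), (0:ℝ) < t := eventually_mem_of_tendsto_nhdsWithin tendsto_id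
  rcases (hev.and hev2).exists with ⟨t, h1, ht0⟩
  have hsub : (x - t • q) - x = -(t • q) := by abel
  rw [hsub] at h1
  have hlip := hφLip.norm_sub_le (x - t • q) x
  have hnorm : ‖-(t • q)‖ = t * ‖q‖ := by
    rw [norm_neg, norm_smul, Real.norm_eq_abs, abs_of_pos ht0]
  have hinner : ⟪q, -(t • q)⟫ = -(t * ‖q‖ ^ 2) := by
    rw [inner_neg_right, real_inner_smul_right, real_inner_self_eq_norm_sq]
  rw [hinner, hnorm] at h1
  have hd : |φ (x - t • q) - φ x| ≤ κ * (t * ‖q‖) := by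
    have := hφLip.norm_sub_le (x - t • q) x
    rw [hsub, hnorm] at this
    simpa [Real.norm_eq_abs] using this
  have h2 : -(κ * (t * ‖q‖)) ≤ φ (x - t • q) - φ x := by
    have := abs_le.mp hd; linarith [this.1]
  -- h1 : φ(x - tq) - φ x + t‖q‖² ≤ ε t ‖q‖
  nlinarith [mul_pos ht0 hqn]

lemma IsTonelli.contDiff_right (hH : IsTonelli H) (x : E n) : ContDiff ℝ 2 (H x) := by
  have : (H x) = (fun q : E n × E n => H q.1 q.2) ∘ (fun p => (x, p)) := rfl
  rw [this]
  exact hH.smooth.comp (contDiff_const.prodMk contDiff_id)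

lemma IsTonelli.continuous (hH : IsTonelli H) : Continuous (fun q : E n × E n => H q.1 q.2) :=
  hH.smooth.continuous

lemma lag_bddAbove (hH : IsTonelli H) {A B : ℝ} (hB : ∀ x p, A * ‖p‖ - B ≤ H x p)
    (x : E n) {v : E n} (hv : ‖v‖ ≤ A) :
    ∀ p : E n, ⟪p, v⟫ - H x p ≤ B := by
  intro p
  have h1 : ⟪p, v⟫ ≤ ‖p‖ * ‖v‖ := real_inner_le_norm p v
  have h2 := hB x p
  nlinarith [norm_nonneg p, norm_nonneg v]

lemma lag_bddAbove' (hH : IsTonelli H) (x v : E n) :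
    BddAbove (Set.range fun p : E n => ⟪p, v⟫ - H x p) := by
  obtain ⟨B, hB⟩ := hH.superlinear ‖v‖ (norm_nonneg v)
  exact ⟨B, by rintro b ⟨p, rfl⟩; exact lag_bddAbove hH hB x le_rfl p⟩

lemma le_lag (hH : IsTonelli H) (x v p : E n) : ⟪p, v⟫ - H x p ≤ Lag H x v :=
  le_ciSup (lag_bddAbove' hH x v) p

lemma lag_le (hH : IsTonelli H) {x v : E n} {B : ℝ} (hB : ∀ p : E n, ⟪p, v⟫ - H x p ≤ B) :
    Lag H x v ≤ B := ciSup_le hB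

/-- If the Fenchel supremum is attained at `p₀`, then `∇_p H (x, p₀) = v`. -/
lemma lag_attained_gradient (hH : IsTonelli H) {x v p₀ : E n}
    (hmax : Lag H x v = ⟪p₀, v⟫ - H x p₀) : gradient (H x) p₀ = v := by
  set f : E n → ℝ := fun p => ⟪v, p⟫ - H x p with hf
  have hfv : ∀ p, f p = ⟪p, v⟫ - H x p := fun p => by rw [hf]; rw [real_inner_comm]
  have hmax' : IsLocalMax f p₀ := by
    apply Filter.Eventually.of_forall
    intro p
    rw [hfv, hfv, ← hmax]
    exact le_lag hH x v p
  have hdH : DifferentiableAt ℝ (H x) p₀ :=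
    ((hH.contDiff_right x).differentiable (by norm_num)).differentiableAt
  have hdf : DifferentiableAt ℝ f p₀ := by
    apply DifferentiableAt.sub _ hdH
    exact (innerSL ℝ v).differentiableAt
  have hzero : fderiv ℝ f p₀ = 0 := hmax'.fderiv_eq_zero
  have hfderiv : fderiv ℝ f p₀ = (innerSL ℝ v) - fderiv ℝ (H x) p₀ := by
    have heq : f = fun p => (innerSL ℝ v) p - H x p := rfl
    rw [heq, fderiv_fun_sub (innerSL ℝ v).differentiableAt hdH]
    congr 1
    exact (innerSL ℝ v).fderiv
  have hHd : fderiv ℝ (H x) p₀ = innerSL ℝ v := by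
    have := hfderiv.symm.trans hzero
    rwa [sub_eq_zero, eq_comm] at this
  have hgrad : HasGradientAt (H x) v p₀ := by
    rw [hasGradientAt_iff_hasFDerivAt]
    have : (InnerProductSpace.toDual ℝ (E n)) v = innerSL ℝ v := by
      ext w; simp [InnerProductSpace.toDual_apply_apply]
    rw [this, ← hHd]
    exact hdH.hasFDerivAt
  exact hgrad.gradient

/-- chain rule: derivative of `φ ∘ γ` equals `⟪q, γ'⟫` for every supergradient `q`. -/
lemma chain_rule_eq {C : ℝ} (hC : 0 ≤ C) {φ : E n → ℝ} (hφ : Semiconcave C φ)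
    {g : ℝ → E n} {s : ℝ} {v : E n} (hv : HasDerivAt g v s)
    {d : ℝ} (hd : HasDerivAt (fun t => φ (g t)) d s)
    {q : E n} (hq : q ∈ superdiff φ (g s)) : d = ⟪q, v⟫ := by
  set F : ℝ → ℝ := fun t => φ (g t) - φ (g s) - ⟪q, g t - g s⟫ - C / 2 * ‖g t - g s‖ ^ 2
    with hF
  have hmax : IsLocalMax F s := by
    apply Filter.Eventually.of_forall
    intro t
    have h1 := superdiff_global hC hφ hq (g t)
    simp only [hF]
    simp only [sub_self, inner_zero_right, norm_zero]
    nlinarith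
  -- derivative computations
  have hw : HasDerivAt (fun t => g t - g s) v s := hv.sub_const (g s)
  have hinner : HasDerivAt (fun t => ⟪q, g t - g s⟫) ⟪q, v⟫ s := by
    have h := (hasDerivAt_const s q).inner ℝ hw
    simpa using h
  have hns : HasDerivAt (fun t => ‖g t - g s‖ ^ 2) 0 s := by
    have h2 : ∀ t, ‖g t - g s‖ ^ 2 = ⟪g t - g s, g t - g s⟫ := fun t =>
      (real_inner_self_eq_norm_sq _).symm
    have h := hw.inner ℝ hw
    simp only [sub_self, inner_zero_left, inner_zero_right, add_zero] at h
    exact (funext h2 : (fun t => ‖g t - g s‖ ^ 2) = _) ▸ h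
  have hdF : HasDerivAt F (d - ⟪q, v⟫ - C / 2 * 0) s := by
    exact ((hd.sub_const (φ (g s))).sub hinner).sub (hns.const_mul (C / 2))
  have hzero := hmax.hasDerivAt_eq_zero hdF
  rw [mul_zero, sub_zero, sub_eq_zero] at hzero
  exact hzero

/-- `Lag` as a countable supremum over a dense sequence. -/
lemma lag_eq_seq (hH : IsTonelli H) {u : ℕ → E n} (hu : DenseRange u) (x v : E n) :
    Lag H x v = ⨆ k : ℕ, (⟪u k, v⟫ - H x (u k)) := by
  have hbdd : BddAbove (Set.range fun k : ℕ => ⟪u k, v⟫ - H x (u k)) := by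
    apply (lag_bddAbove' hH x v).mono
    rintro b ⟨k, rfl⟩; exact ⟨u k, rfl⟩
  apply le_antisymm
  · apply ciSup_le
    intro p
    refine le_of_forall_lt (fun b hb => ?_)
    have hcont : Continuous (fun p : E n => ⟪p, v⟫ - H x p) := by
      have h1 : Continuous (fun p : E n => ⟪p, v⟫) := by
        exact Continuous.inner continuous_id continuous_const
      have h2 : Continuous (H x) := hH.smooth.continuous.comp (Continuous.prodMk_right x)
      exact h1.sub h2
    have hopen : IsOpen {z : E n | b < ⟪z, v⟫ - H x z} := isOpen_lt continuous_const hcont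
    obtain ⟨k, hk⟩ := hu.exists_mem_open hopen ⟨p, hb⟩
    exact (lt_ciSup_iff hbdd).mpr ⟨k, hk⟩
  · exact ciSup_le fun k => le_lag hH x v (u k)

/-- Partial maxima. -/
def pmax (F : ℕ → α → ℝ) : ℕ → α → ℝ
  | 0 => F 0
  | (N + 1) => fun s => max (pmax F N s) (F (N + 1) s)

lemma pmax_le {F : ℕ → α → ℝ} {s : α} {B : ℝ} (hB : ∀ k, F k s ≤ B) : ∀ N, pmax F N s ≤ B := by
  intro N
  induction N with
  | zero => exact hB 0
  | succ N ih => exact max_le ih (hB (N + 1))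

lemma le_pmax {F : ℕ → α → ℝ} {s : α} : ∀ k, F k s ≤ pmax F k s := by
  intro k
  cases k with
  | zero => exact le_rfl
  | succ N => exact le_max_right _ _

lemma pmax_mono {F : ℕ → α → ℝ} {s : α} : Monotone (fun N => pmax F N s) := by
  apply monotone_nat_of_le_succ
  intro N; exact le_max_left _ _

lemma pmax_mem {F : ℕ → α → ℝ} {s : α} : ∀ N, ∃ k, pmax F N s = F k s := by
  intro N
  induction N with
  | zero => exact ⟨0, rfl⟩
  | succ N ih =>
      rcases ih with ⟨k, hk⟩
      rcases max_cases (pmax F N s) (F (N + 1) s) with ⟨h, _⟩ | ⟨h, _⟩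
      · exact ⟨k, by show max _ _ = _; rw [h, hk]⟩
      · exact ⟨N + 1, by show max _ _ = _; rw [h]⟩

lemma tendsto_pmax_ciSup {F : ℕ → α → ℝ} {s : α} (hbdd : BddAbove (Set.range fun k => F k s)) :
    Filter.Tendsto (fun N => pmax F N s) atTop (𝓝 (⨆ k, F k s)) := by
  obtain ⟨B, hB⟩ := hbdd
  have hB' : ∀ k, F k s ≤ B := fun k => hB ⟨k, rfl⟩
  have hbdd2 : BddAbove (Set.range fun N => pmax F N s) :=
    ⟨B, by rintro b ⟨N, rfl⟩; exact pmax_le hB' N⟩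
  have h := tendsto_atTop_ciSup pmax_mono hbdd2
  have : (⨆ N, pmax F N s) = ⨆ k, F k s := by
    apply le_antisymm
    · apply ciSup_le
      intro N
      rcases pmax_mem (F := F) (s := s) N with ⟨k, hk⟩
      rw [hk]; exact le_ciSup ⟨B, hB⟩ k
    · apply ciSup_le
      intro k
      exact le_trans (le_pmax (F := F) (s := s) k) (le_ciSup hbdd2 k)
  rwa [this] at h

/-- a.e.-measurability of a `Lag` composite. -/
lemma lag_comp_aemeasurable (hH : IsTonelli H) {α : Type*} [MeasurableSpace α] {μ : Measure α}
    {x v : α → E n} (hx : AEMeasurable x μ) (hv : AEMeasurable v μ) :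
    AEMeasurable (fun s => Lag H (x s) (v s)) μ := by
  obtain ⟨u, hu⟩ := TopologicalSpace.exists_dense_seq (E n)
  set F : ℕ → α → ℝ := fun k s => ⟪u k, v s⟫ - H (x s) (u k) with hFdef
  have hFm : ∀ k, AEMeasurable (F k) μ := by
    intro k
    have h1 : Continuous (fun w : E n => ⟪u k, w⟫) :=
      Continuous.inner continuous_const continuous_id
    have h2 : Continuous (fun y : E n => H y (u k)) :=
      hH.smooth.continuous.comp (continuous_id.prodMk continuous_const)
    exact ((h1.measurable.comp_aemeasurable hv)).sub (h2.measurable.comp_aemeasurable hx)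
  have hSm : ∀ N, AEMeasurable (pmax F N) μ := by
    intro N
    induction N with
    | zero => exact hFm 0
    | succ N ih => exact AEMeasurable.max ih (hFm (N + 1))
  apply aemeasurable_of_tendsto_metrizable_ae' hSm
  apply Filter.Eventually.of_forall
  intro s
  have hbdd : BddAbove (Set.range fun k => F k s) := by
    apply (lag_bddAbove' hH (x s) (v s)).mono
    rintro b ⟨k, rfl⟩; exact ⟨u k, rfl⟩
  have := tendsto_pmax_ciSup (F := F) (s := s) hbdd
  rwa [← lag_eq_seq hH hu (x s) (v s)] at this


lemma norm_deriv_le_of_lip {f : ℝ → E n} {K : ℝ≥0} (hf : LipschitzWith K f) (s : ℝ) :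
    ‖deriv f s‖ ≤ K := by
  by_cases h : DifferentiableAt ℝ f s
  · have h1 : ‖fderiv ℝ f s‖ ≤ K := by
      apply norm_fderiv_le_of_lip' ℝ K.coe_nonneg
      apply Filter.Eventually.of_forall
      intro y
      have := hf.dist_le_mul y s
      rwa [dist_eq_norm, dist_eq_norm] at this
    calc ‖deriv f s‖ = ‖fderiv ℝ f s 1‖ := rfl
    _ ≤ ‖fderiv ℝ f s‖ * ‖(1:ℝ)‖ := (fderiv ℝ f s).le_opNorm 1
    _ ≤ K := by simpa using h1
  · rw [deriv_zero_of_not_differentiableAt h]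
    simp

end Aux

set_option maxHeartbeats 1000000 in
/-- A curve of maximal slope relative to any measurable selection of `D⁺φ` in fact
dissipates energy at the minimal rate, and is a strict singular characteristic. -/
theorem stmt4 (C : ℝ) (hC : 0 ≤ C) (κ : ℝ≥0) (φ : E n → ℝ)
    (hφ : Semiconcave C φ) (hφLip : LipschitzWith κ φ)
    (H : E n → E n → ℝ) (hH : IsTonelli H)
    (pSel : E n → E n) (hmeas : Measurable pSel) (hsel : ∀ x, pSel x ∈ superdiff φ x)
    (ps : E n → E n) (hps : MinSel φ H ps)
    (T : ℝ) (hT : 0 < T) (γ : ℝ → E n) (K : ℝ≥0)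
    (hγ : LipschitzOnWith K γ (Set.Icc 0 T))
    (hms : ∀ t₁ t₂ : ℝ, 0 ≤ t₁ → t₁ ≤ t₂ → t₂ ≤ T →
      φ (γ t₂) - φ (γ t₁) =
        ∫ s in t₁..t₂,
          (Lag H (γ s) (derivWithin γ (Set.Icc 0 T) s) + H (γ s) (pSel (γ s)))) :
    ∀ᵐ s ∂(volume.restrict (Set.Icc 0 T)),
      H (γ s) (pSel (γ s)) = H (γ s) (ps (γ s)) ∧
      derivWithin γ (Set.Icc 0 T) s = Hp H (γ s) (ps (γ s)) := by
  classical
  have hT' : (0:ℝ) ≤ T := hT.le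
  -- Lipschitz extension of γ to all of ℝ
  set G : ℝ → E n := fun t => γ ((Set.projIcc 0 T hT' t : Set.Icc (0:ℝ) T) : ℝ) with hGdef
  have hGlip : LipschitzWith K G := by
    have h1 : LipschitzWith K ((Set.Icc (0:ℝ) T).restrict γ) :=
      lipschitzOnWith_iff_restrict.mp hγ
    have h2 := h1.comp (LipschitzWith.projIcc hT')
    rw [mul_one] at h2
    exact h2
  have hG_eq : ∀ t ∈ Set.Icc (0:ℝ) T, G t = γ t := by
    intro t ht
    simp only [hGdef, Set.projIcc_of_mem hT' ht]
  -- the composite h = φ ∘ G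
  set h : ℝ → ℝ := fun t => φ (G t) with hhdef
  have hhlip : LipschitzWith (κ * K) h := hφLip.comp hGlip
  -- the velocity
  set vfun : ℝ → E n := fun s => derivWithin γ (Set.Icc 0 T) s with hvfun_def
  have hvfun : ∀ s ∈ Set.Ioo (0:ℝ) T, vfun s = deriv G s := by
    intro s hs
    have h1 : derivWithin γ (Set.Icc 0 T) s = derivWithin G (Set.Icc 0 T) s := by
      apply derivWithin_congr
      · intro t ht; exact (hG_eq t ht).symm
      · exact (hG_eq s (Set.Ioo_subset_Icc_self hs)).symm
    have h2 : derivWithin G (Set.Icc 0 T) s = deriv G s :=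
      derivWithin_of_mem_nhds (Icc_mem_nhds hs.1 hs.2)
    exact h1.trans h2
  have hvK : ∀ s, ‖deriv G s‖ ≤ K := fun s => norm_deriv_le_of_lip hGlip s
  -- the integrand
  set gfun : ℝ → ℝ := fun s => Lag H (γ s) (vfun s) + H (γ s) (pSel (γ s)) with hgfun_def
  set gext : ℝ → ℝ := (Set.Icc (0:ℝ) T).indicator gfun with hgext_def
  -- a.e. interior
  have hae_Ioo : ∀ᵐ s ∂(volume.restrict (Set.Icc 0 T)), s ∈ Set.Ioo (0:ℝ) T := by
    have h0 : volume ({0, T} : Set ℝ) = 0 :=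
      (Set.Finite.insert 0 (Set.finite_singleton T)).measure_zero volume
    have h1 : ∀ᵐ s ∂volume, s ∈ Set.Icc (0:ℝ) T → s ∈ Set.Ioo (0:ℝ) T := by
      filter_upwards [measure_eq_zero_iff_ae_notMem.mp h0] with s hs hIcc
      simp only [Set.mem_insert_iff, Set.mem_singleton_iff, not_or] at hs
      exact ⟨lt_of_le_of_ne hIcc.1 (Ne.symm hs.1), lt_of_le_of_ne hIcc.2 hs.2⟩
    exact (ae_restrict_iff' measurableSet_Icc).mpr h1
  -- measurability
  have hγae : AEMeasurable γ (volume.restrict (Set.Icc 0 T)) := by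
    apply (hGlip.continuous.measurable.aemeasurable).congr
    filter_upwards [ae_restrict_mem measurableSet_Icc] with s hs
    exact hG_eq s hs
  have hvae : AEMeasurable vfun (volume.restrict (Set.Icc 0 T)) := by
    apply (measurable_deriv G).aemeasurable.congr
    filter_upwards [hae_Ioo] with s hs
    exact (hvfun s hs).symm
  have hLagae : AEMeasurable (fun s => Lag H (γ s) (vfun s)) (volume.restrict (Set.Icc 0 T)) :=
    lag_comp_aemeasurable hH hγae hvae
  have hHae : AEMeasurable (fun s => H (γ s) (pSel (γ s))) (volume.restrict (Set.Icc 0 T)) := by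
    have hpair : AEMeasurable (fun s => ((γ s, pSel (γ s)) : E n × E n))
        (volume.restrict (Set.Icc 0 T)) :=
      hγae.prodMk (hmeas.comp_aemeasurable hγae)
    exact hH.smooth.continuous.measurable.comp_aemeasurable hpair
  have hgae : AEMeasurable gfun (volume.restrict (Set.Icc 0 T)) := hLagae.add hHae
  -- bounds
  obtain ⟨BK, hBK⟩ := hH.superlinear K K.coe_nonneg
  obtain ⟨M0, hM0⟩ : ∃ M0 : ℝ, ∀ s ∈ Set.Icc (0:ℝ) T, ‖H (G s) 0‖ ≤ M0 := by
    have hc : Continuous (fun s : ℝ => H (G s) 0) :=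
      hH.smooth.continuous.comp (hGlip.continuous.prodMk continuous_const)
    exact isCompact_Icc.exists_bound_of_continuousOn hc.continuousOn
  obtain ⟨M1, hM1⟩ : ∃ M1 : ℝ, ∀ z ∈ (G '' Set.Icc (0:ℝ) T) ×ˢ Metric.closedBall (0 : E n) κ,
      ‖H z.1 z.2‖ ≤ M1 := by
    have hcomp : IsCompact ((G '' Set.Icc (0:ℝ) T) ×ˢ Metric.closedBall (0 : E n) κ) :=
      (isCompact_Icc.image hGlip.continuous).prod (isCompact_closedBall 0 κ)
    exact hcomp.exists_bound_of_continuousOn hH.smooth.continuous.continuousOn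
  have hbound : ∀ᵐ s ∂(volume.restrict (Set.Icc 0 T)), ‖gfun s‖ ≤ |BK| + |M0| + |M1| := by
    filter_upwards [ae_restrict_mem measurableSet_Icc, hae_Ioo] with s hsIcc hsIoo
    have hγG : γ s = G s := (hG_eq s hsIcc).symm
    have hLag_ub : Lag H (γ s) (vfun s) ≤ BK := by
      apply lag_le hH
      apply lag_bddAbove hH hBK
      rw [hvfun s hsIoo]; exact hvK s
    have hLag_lb : -‖H (G s) 0‖ ≤ Lag H (γ s) (vfun s) := by
      have := le_lag hH (γ s) (vfun s) 0
      simp only [inner_zero_left, zero_sub] at this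
      calc -‖H (G s) 0‖ ≤ -(H (G s) 0) := by
            have : H (G s) 0 ≤ ‖H (G s) 0‖ := by rw [Real.norm_eq_abs]; exact le_abs_self _
            linarith
      _ = -(H (γ s) 0) := by rw [hγG]
      _ ≤ Lag H (γ s) (vfun s) := this
    have hH_b : ‖H (γ s) (pSel (γ s))‖ ≤ M1 := by
      apply hM1 (γ s, pSel (γ s))
      constructor
      · rw [hγG]; exact Set.mem_image_of_mem G hsIcc
      · rw [Metric.mem_closedBall, dist_zero_right]
        exact superdiff_norm_le hφLip (hsel (γ s))
    have hM0s : ‖H (G s) 0‖ ≤ M0 := hM0 s hsIcc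
    rw [Real.norm_eq_abs, abs_le]
    have hH_b' : |H (γ s) (pSel (γ s))| ≤ M1 := by rw [← Real.norm_eq_abs]; exact hH_b
    have h1 := abs_le.mp hH_b'
    constructor <;> simp only [hgfun_def] <;> nlinarith [abs_nonneg BK, abs_nonneg M0,
      abs_nonneg M1, le_abs_self BK, le_abs_self M0, le_abs_self M1, neg_abs_le BK,
      neg_abs_le M0, neg_abs_le M1, norm_nonneg (H (G s) 0), h1.1, h1.2]
  have hIntOn : IntegrableOn gfun (Set.Icc 0 T) volume := by
    have hconst : IntegrableOn (fun _ : ℝ => |BK| + |M0| + |M1|) (Set.Icc 0 T) volume := by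
      apply (integrableOn_const_iff (C := |BK| + |M0| + |M1|)).mpr
      right
      simp [Real.volume_Icc]
    exact hconst.integrable.mono' hgae.aestronglyMeasurable hbound
  have hgext_int : Integrable gext volume := hIntOn.integrable_indicator measurableSet_Icc
  -- Lebesgue differentiation
  have hLeb := IsUnifLocDoublingMeasure.ae_tendsto_average (μ := (volume : Measure ℝ))
    hgext_int.locallyIntegrable 1
  -- Rademacher
  have hRad1 : ∀ᵐ s ∂(volume : Measure ℝ), DifferentiableAt ℝ G s :=
    hGlip.ae_differentiableAt
  have hRad2 : ∀ᵐ s ∂(volume : Measure ℝ), DifferentiableAt ℝ h s :=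
    hhlip.ae_differentiableAt
  -- main argument
  filter_upwards [hae_Ioo, ae_restrict_of_ae hLeb, ae_restrict_of_ae hRad1,
    ae_restrict_of_ae hRad2, ae_restrict_mem measurableSet_Icc]
    with s hsIoo hsLeb hsG hsh hsIcc
  set x : E n := γ s with hxdef
  set v : E n := deriv G s with hvdef
  have hGx : G s = x := hG_eq s hsIcc
  have hvs : vfun s = v := hvfun s hsIoo
  have hdd : HasDerivAt h (deriv h s) s := hsh.hasDerivAt
  set d : ℝ := deriv h s with hddef
  have hvd : HasDerivAt G v s := hsG.hasDerivAt
  -- chain rule for all supergradients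
  have hchain : ∀ q ∈ superdiff φ x, d = ⟪q, v⟫ := by
    intro q hq
    have hq' : q ∈ superdiff φ (G s) := by rwa [hGx]
    exact chain_rule_eq hC hφ hvd hdd hq'
  -- Lebesgue differentiation gives gext s = d
  have hgd : gfun s = d := by
    have h1 : Filter.Tendsto (fun r : ℝ => ⨍ y in Metric.closedBall s r, gext y)
        (𝓝[>] (0:ℝ)) (𝓝 (gext s)) := by
      apply hsLeb (fun _ => s) id tendsto_id
      filter_upwards [self_mem_nhdsWithin] with r hr
      have : (0:ℝ) < r := hr
      exact Metric.mem_closedBall_self (by simp only [id_eq]; linarith)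
    have h2 : ∀ᶠ r : ℝ in 𝓝[>] (0:ℝ),
        (⨍ y in Metric.closedBall s r, gext y) = (h (s + r) - h (s - r)) / (2 * r) := by
      have hmem : Set.Ioo (0:ℝ) (min s (T - s)) ∈ 𝓝[>] (0:ℝ) :=
        Ioo_mem_nhdsGT_of_mem ⟨le_rfl, lt_min hsIoo.1 (by linarith [hsIoo.2])⟩
      filter_upwards [hmem] with r hr
      have hr0 : 0 < r := hr.1
      have hr1 : 0 ≤ s - r := by
        have := lt_min_iff.mp hr.2
        linarith [this.1]
      have hr2 : s + r ≤ T := by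
        have := lt_min_iff.mp hr.2
        linarith [this.2]
      have hrle : s - r ≤ s + r := by linarith
      have hsub : Set.Icc (s - r) (s + r) ⊆ Set.Icc 0 T := by
        apply Set.Icc_subset_Icc hr1 hr2
      -- compute the average
      rw [setAverage_eq, Real.closedBall_eq_Icc]
      have hvol : (volume (Set.Icc (s - r) (s + r))).toReal = 2 * r := by
        rw [Real.volume_Icc]
        rw [ENNReal.toReal_ofReal (by linarith)]
        ring
      have hint : ∫ y in Set.Icc (s - r) (s + r), gext y =
          ∫ y in (s - r)..(s + r), gfun y := by
        rw [integral_Icc_eq_integral_Ioc, ← intervalIntegral.integral_of_le hrle]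
        apply intervalIntegral.integral_congr
        intro y hy
        rw [Set.uIcc_of_le hrle] at hy
        exact Set.indicator_of_mem (hsub hy) gfun
      rw [measureReal_def, hvol, hint]
      have hms' := hms (s - r) (s + r) hr1 hrle hr2
      rw [← hms']
      have e1 : γ (s + r) = G (s + r) := (hG_eq (s + r) ⟨by linarith, hr2⟩).symm
      have e2 : γ (s - r) = G (s - r) := (hG_eq (s - r) ⟨hr1, by linarith⟩).symm
      rw [e1, e2]
      show (2 * r)⁻¹ • (φ (G (s + r)) - φ (G (s - r))) = (h (s + r) - h (s - r)) / (2 * r)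
      rw [smul_eq_mul]
      have hr0' : (2 * r) ≠ 0 := by positivity
      field_simp
      rfl
    have h3 : Filter.Tendsto (fun r : ℝ => (h (s + r) - h (s - r)) / (2 * r))
        (𝓝[>] (0:ℝ)) (𝓝 d) := by
      have hslope := hasDerivAt_iff_tendsto_slope.mp hdd
      have hmapa : Filter.Tendsto (fun r : ℝ => s + r) (𝓝[>] (0:ℝ)) (𝓝[≠] s) := by
        rw [tendsto_nhdsWithin_iff]
        constructor
        · have hc : Continuous (fun r : ℝ => s + r) := by continuity
          have : Filter.Tendsto (fun r : ℝ => s + r) (𝓝 (0:ℝ)) (𝓝 s) := by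
            simpa using hc.tendsto (0:ℝ)
          exact this.mono_left nhdsWithin_le_nhds
        · filter_upwards [self_mem_nhdsWithin] with r hr
          have : (0:ℝ) < r := hr
          simp only [Set.mem_compl_iff, Set.mem_singleton_iff]
          intro hcon
          nlinarith [add_eq_left.mp hcon]
      have hmapb : Filter.Tendsto (fun r : ℝ => s - r) (𝓝[>] (0:ℝ)) (𝓝[≠] s) := by
        rw [tendsto_nhdsWithin_iff]
        constructor
        · have hc : Continuous (fun r : ℝ => s - r) := by continuity
          have : Filter.Tendsto (fun r : ℝ => s - r) (𝓝 (0:ℝ)) (𝓝 s) := by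
            simpa using hc.tendsto (0:ℝ)
          exact this.mono_left nhdsWithin_le_nhds
        · filter_upwards [self_mem_nhdsWithin] with r hr
          have hr' : (0:ℝ) < r := hr
          simp only [Set.mem_compl_iff, Set.mem_singleton_iff]
          intro hcon
          have : r = 0 := by linarith [sub_eq_self.mp hcon]
          linarith
      have ha : Filter.Tendsto (fun r : ℝ => slope h s (s + r)) (𝓝[>] (0:ℝ)) (𝓝 d) :=
        hslope.comp hmapa
      have hb : Filter.Tendsto (fun r : ℝ => slope h s (s - r)) (𝓝[>] (0:ℝ)) (𝓝 d) :=
        hslope.comp hmapb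
      have hcomb := ((ha.add hb).div_const 2)
      have : (d + d) / 2 = d := by ring
      rw [this] at hcomb
      apply hcomb.congr'
      filter_upwards [self_mem_nhdsWithin] with r hr
      have hr0 : (0:ℝ) < r := hr
      have hr0' : r ≠ 0 := ne_of_gt hr0
      show (slope h s (s + r) + slope h s (s - r)) / 2 = (h (s + r) - h (s - r)) / (2 * r)
      rw [slope_def_field, slope_def_field]
      have ea : s + r - s = r := by ring
      have eb : s - r - s = -r := by ring
      rw [ea, eb, div_neg, ← sub_eq_add_neg, div_sub_div_same, div_div, mul_comm r 2]
      congr 1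
      ring
    have hfin := tendsto_nhds_unique (Filter.Tendsto.congr' h2 h1) h3
    rw [hgext_def, Set.indicator_of_mem hsIcc] at hfin
    exact hfin
  -- the two key identities
  have e0 : gfun s = Lag H x v + H x (pSel x) := by
    show Lag H x (vfun s) + H x (pSel x) = Lag H x v + H x (pSel x)
    rw [hvs]
  have e1 : Lag H x v + H x (pSel x) = ⟪pSel x, v⟫ := by
    rw [← e0, hgd]; exact hchain (pSel x) (hsel x)
  have e2 : Lag H x v + H x (pSel x) = ⟪ps x, v⟫ := by
    rw [← e0, hgd]; exact hchain (ps x) (hps x).1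
  have e3 : ⟪ps x, v⟫ - H x (ps x) ≤ Lag H x v := le_lag hH x v (ps x)
  have concl1 : H x (pSel x) = H x (ps x) := by
    apply le_antisymm
    · linarith
    · exact (hps x).2 (pSel x) (hsel x)
  have concl2 : Lag H x v = ⟪ps x, v⟫ - H x (ps x) := by linarith
  have hgrad := lag_attained_gradient hH concl2
  refine ⟨concl1, ?_⟩
  show vfun s = Hp H x (ps x)
  rw [hvs]
  exact hgrad.symm


end
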